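/- Let A = diag(α₁,...,αₙ) and B = diag(β₁,...,βₙ) be real diagonal matrices whose diagonal entries strictly interlace (α₁ < β₁ < α₂ < ... < αₙ < βₙ). Then there exist a unitary matrix X and a rank-one matrix R such that A·X − X·B = R. -/

import Mathlib

open Finset Polynomial

namespace Stmt17Aux

variable {n : ℕ}

section

variable (α β : Fin n → ℝ)

/-- The weights of the rank-one perturbation. -/
noncomputable def cw (j : Fin n) : ℝ :=
  (∏ i, (β j - α i)) / (∏ m ∈ univ.erase j, (β j - β m))

variable (hα : StrictMono α) (hint1 : ∀ i, α i < β i)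
  (hint2 : ∀ i j : Fin n, i < j → β i < α j)

include hα hint1 hint2

theorem alpha_ne_beta (i j : Fin n) : α i ≠ β j := by
  rcases le_or_gt i j with h | h
  · exact ne_of_lt (lt_of_le_of_lt (hα.monotone h) (hint1 j))
  · exact (ne_of_lt (hint2 j i h)).symm

theorem beta_strictMono : StrictMono β := fun i j h =>
  (hint2 i j h).trans (hint1 j)

theorem cw_pos (j : Fin n) : 0 < cw α β j := by
  classical
  have hfilter : (univ.erase j).filter (fun m => j < m) = univ.filter (fun m => j < m) := by
    ext m
    simp only [mem_filter, mem_erase, mem_univ, true_and, and_true]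
    exact ⟨fun h => h.2, fun h => ⟨ne_of_gt h, h⟩⟩
  set k := (univ.filter (fun m : Fin n => j < m)).card with hk
  -- numerator
  have hnum : (∏ i, (β j - α i)) =
      (-1) ^ k * ((∏ i ∈ univ.filter (fun i => j < i), (α i - β j)) *
        ∏ i ∈ univ.filter (fun i => ¬ j < i), (β j - α i)) := by
    rw [← prod_filter_mul_prod_filter_not univ (fun i => j < i) (fun i => (β j - α i))]
    have : ∏ i ∈ univ.filter (fun i => j < i), (β j - α i) =
        (-1) ^ k * ∏ i ∈ univ.filter (fun i => j < i), (α i - β j) := by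
      rw [hk, ← prod_const, ← prod_mul_distrib]
      exact prod_congr rfl fun i _ => by ring
    rw [this]; ring
  have hden : (∏ m ∈ univ.erase j, (β j - β m)) =
      (-1) ^ k * ((∏ m ∈ univ.filter (fun m => j < m), (β m - β j)) *
        ∏ m ∈ (univ.erase j).filter (fun m => ¬ j < m), (β j - β m)) := by
    rw [← prod_filter_mul_prod_filter_not (univ.erase j) (fun m => j < m) (fun m => (β j - β m)),
      hfilter]
    have : ∏ m ∈ univ.filter (fun m => j < m), (β j - β m) =
        (-1) ^ k * ∏ m ∈ univ.filter (fun m => j < m), (β m - β j) := by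
      rw [hk, ← prod_const, ← prod_mul_distrib]
      exact prod_congr rfl fun i _ => by ring
    rw [this]; ring
  have hP : 0 < (∏ i ∈ univ.filter (fun i => j < i), (α i - β j)) *
      ∏ i ∈ univ.filter (fun i => ¬ j < i), (β j - α i) := by
    apply mul_pos
    · exact prod_pos fun i hi => sub_pos.mpr (hint2 j i (by simpa using hi))
    · refine prod_pos fun i hi => sub_pos.mpr ?_
      have : i ≤ j := by simpa using hi
      exact lt_of_le_of_lt (hα.monotone this) (hint1 j)
  have hQ : 0 < (∏ m ∈ univ.filter (fun m => j < m), (β m - β j)) *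
      ∏ m ∈ (univ.erase j).filter (fun m => ¬ j < m), (β j - β m) := by
    apply mul_pos
    · exact prod_pos fun m hm =>
        sub_pos.mpr (beta_strictMono α β hα hint1 hint2 (by simpa using hm))
    · refine prod_pos fun m hm => sub_pos.mpr ?_
      have hm' : m ≠ j ∧ ¬ j < m := by simpa using hm
      have : m < j := lt_of_le_of_ne (not_lt.mp hm'.2) hm'.1
      exact beta_strictMono α β hα hint1 hint2 this
  rw [cw, hnum, hden, mul_div_mul_left _ _ (pow_ne_zero _ (by norm_num : (-1:ℝ) ≠ 0))]
  exact div_pos hP hQ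

/-- The key polynomial identity (Lagrange interpolation of `p - q` at the `β`'s). -/
theorem key_poly_id :
    (∏ i, (X - C (α i)) : ℝ[X]) =
      (∏ m, (X - C (β m))) + ∑ j, C (cw α β j) * ∏ m ∈ univ.erase j, (X - C (β m)) := by
  classical
  rcases Nat.eq_zero_or_pos n with hn | hn
  · subst hn; simp
  set p : ℝ[X] := ∏ i, (X - C (α i)) with hp
  set q : ℝ[X] := ∏ m, (X - C (β m)) with hq
  set qe : Fin n → ℝ[X] := fun j => ∏ m ∈ univ.erase j, (X - C (β m)) with hqe
  have hβinj : Function.Injective β := (beta_strictMono α β hα hint1 hint2).injective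
  have hpm : p.Monic := monic_prod_of_monic _ _ fun i _ => monic_X_sub_C _
  have hqm : q.Monic := monic_prod_of_monic _ _ fun i _ => monic_X_sub_C _
  have hqem : ∀ j, (qe j).Monic := fun j => monic_prod_of_monic _ _ fun i _ => monic_X_sub_C _
  have hpdeg : p.degree = (n : ℕ) := by
    rw [hp, degree_prod]
    simp [degree_X_sub_C]
  have hqdeg : q.degree = (n : ℕ) := by
    rw [hq, degree_prod]
    simp [degree_X_sub_C]
  have hqedeg : ∀ j, (qe j).degree = ((n - 1 : ℕ) : WithBot ℕ) := by
    intro j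
    rw [hqe, degree_prod]
    simp [degree_X_sub_C, Finset.card_erase_of_mem]
  apply eq_of_degree_sub_lt_of_eval_finset_eq (univ.image β)
  · have hcard : (univ.image β).card = n := by
      rw [Finset.card_image_of_injective _ hβinj, card_univ, Fintype.card_fin]
    rw [hcard]
    have h1 : (p - q).degree < (n : ℕ) := by
      rw [← hpdeg]
      exact degree_sub_lt (hpdeg.trans hqdeg.symm) hpm.ne_zero (by rw [hpm.leadingCoeff, hqm.leadingCoeff])
    have h2 : (∑ j, C (cw α β j) * qe j).degree < (n : ℕ) := by
      refine lt_of_le_of_lt (degree_sum_le _ _) ?_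
      rw [Finset.sup_lt_iff (by exact_mod_cast WithBot.bot_lt_coe n)]
      intro j _
      refine lt_of_le_of_lt (degree_mul_le _ _) ?_
      refine lt_of_le_of_lt (add_le_add degree_C_le (le_of_eq (hqedeg j))) ?_
      rw [zero_add]
      exact_mod_cast Nat.cast_lt.mpr (Nat.sub_lt hn one_pos)
    calc (p - (q + ∑ j, C (cw α β j) * qe j)).degree
        = ((p - q) - ∑ j, C (cw α β j) * qe j).degree := by ring_nf
      _ ≤ max (p - q).degree (∑ j, C (cw α β j) * qe j).degree := degree_sub_le _ _
      _ < (n : ℕ) := max_lt h1 h2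
  · intro x hx
    obtain ⟨l, -, rfl⟩ := Finset.mem_image.mp hx
    have hq0 : q.eval (β l) = 0 := by
      rw [hq, eval_prod]
      exact Finset.prod_eq_zero (mem_univ l) (by simp)
    have hqe0 : ∀ j, j ≠ l → (qe j).eval (β l) = 0 := by
      intro j hj
      rw [hqe, eval_prod]
      exact Finset.prod_eq_zero (Finset.mem_erase.mpr ⟨hj.symm, mem_univ l⟩) (by simp)
    have hQe : (qe l).eval (β l) = ∏ m ∈ univ.erase l, (β l - β m) := by
      rw [hqe, eval_prod]; simp
    have hQene : (∏ m ∈ univ.erase l, (β l - β m)) ≠ 0 := by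
      refine Finset.prod_ne_zero_iff.mpr fun m hm => sub_ne_zero.mpr ?_
      exact fun h => (Finset.mem_erase.mp hm).1.symm (hβinj h)
    rw [eval_add, hq0, zero_add, eval_finset_sum]
    rw [Finset.sum_eq_single l (fun j _ hj => by rw [eval_mul, hqe0 j hj, mul_zero])
      (fun h => absurd (mem_univ l) h)]
    rw [eval_mul, eval_C, hQe, cw, div_mul_cancel₀ _ hQene, hp, eval_prod]
    simp

/-- The crucial sum identity `∑ⱼ cⱼ/(αᵢ - βⱼ) = -1`. -/
theorem key_sum (i : Fin n) : ∑ j, cw α β j / (α i - β j) = -1 := by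
  classical
  have hQ : (∏ m, (α i - β m)) ≠ 0 :=
    Finset.prod_ne_zero_iff.mpr fun m _ =>
      sub_ne_zero.mpr (alpha_ne_beta α β hα hint1 hint2 i m)
  have hfact : ∀ j, (α i - β j) * (∏ m ∈ univ.erase j, (α i - β m)) = ∏ m, (α i - β m) :=
    fun j => Finset.mul_prod_erase univ (fun m => α i - β m) (mem_univ j)
  have hkey := congrArg (Polynomial.eval (α i)) (key_poly_id α β hα hint1 hint2)
  rw [eval_prod, eval_add, eval_prod, eval_finset_sum] at hkey
  have hp0 : (∏ x, ((X : ℝ[X]) - C (α x)).eval (α i)) = 0 :=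
    Finset.prod_eq_zero (mem_univ i) (by simp)
  rw [hp0] at hkey
  simp only [eval_mul, eval_C, eval_prod, eval_sub, eval_X] at hkey
  -- hkey : 0 = ∏ m, (α i - β m) + ∑ j, cw j * ∏ m ∈ erase j, (α i - β m)
  have hterm : ∀ j : Fin n, cw α β j / (α i - β j) =
      cw α β j * (∏ m ∈ univ.erase j, (α i - β m)) / (∏ m, (α i - β m)) := by
    intro j
    have hd : (α i - β j) ≠ 0 :=
      sub_ne_zero.mpr (alpha_ne_beta α β hα hint1 hint2 i j)
    have hPe : (∏ m ∈ univ.erase j, (α i - β m)) ≠ 0 := by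
      intro h0
      exact hQ (by rw [← hfact j, h0, mul_zero])
    rw [← hfact j]
    field_simp
  rw [Finset.sum_congr rfl fun j _ => hterm j, ← Finset.sum_div]
  have : ∑ j, cw α β j * ∏ m ∈ univ.erase j, (α i - β m) = -(∏ m, (α i - β m)) := by
    linarith [hkey]
  rw [this, neg_div, div_self hQ]

end

end Stmt17Aux

/-- For strictly interlacing real diagonal matrices `A = diag α`,
`B = diag β`, the Sylvester equation `A·X − X·B = R` has a solution with `X`
unitary and `R` of rank one. -/
theorem stmt_17 {n : ℕ} (hn : 0 < n) (α β : Fin n → ℝ)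
    (hα : StrictMono α)
    (hint1 : ∀ i, α i < β i)
    (hint2 : ∀ i j : Fin n, i < j → β i < α j) :
    ∃ (X R : Matrix (Fin n) (Fin n) ℂ),
      X ∈ Matrix.unitaryGroup (Fin n) ℂ ∧ R.rank = 1 ∧
      Matrix.diagonal (fun i => (α i : ℂ)) * X -
        X * Matrix.diagonal (fun i => (β i : ℂ)) = R := by
  classical
  set c := Stmt17Aux.cw α β with hc
  have hcpos : ∀ j, 0 < c j := Stmt17Aux.cw_pos α β hα hint1 hint2
  have hS : ∀ i, ∑ j, c j / (α i - β j) = -1 := Stmt17Aux.key_sum α β hα hint1 hint2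
  have hne : ∀ i j, α i - β j ≠ 0 := fun i j =>
    sub_ne_zero.mpr (Stmt17Aux.alpha_ne_beta α β hα hint1 hint2 i j)
  set w : Fin n → ℝ := fun i => ∑ j, c j / (α i - β j) ^ 2 with hw
  have hwpos : ∀ i, 0 < w i := by
    intro i
    refine Finset.sum_pos (fun j _ => div_pos (hcpos j) (by have := hne i j; positivity)) ?_
    exact Finset.univ_nonempty_iff.mpr ⟨⟨0, hn⟩⟩
  set y : Fin n → ℝ := fun i => (Real.sqrt (w i))⁻¹ with hy
  set z : Fin n → ℝ := fun j => Real.sqrt (c j) with hz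
  have hypos : ∀ i, 0 < y i := fun i => inv_pos.mpr (Real.sqrt_pos.mpr (hwpos i))
  have hzpos : ∀ j, 0 < z j := fun j => Real.sqrt_pos.mpr (hcpos j)
  have hzz : ∀ j, z j * z j = c j := fun j => Real.mul_self_sqrt (hcpos j).le
  set ξ : Fin n → Fin n → ℝ := fun i j => y i * z j / (α i - β j) with hξ
  -- orthogonality of the rows
  have horth : ∀ i k : Fin n, ∑ j, ξ i j * ξ k j = if i = k then 1 else 0 := by
    intro i k
    by_cases hik : i = k
    · subst hik
      simp only [if_true]
      have : ∀ j, ξ i j * ξ i j = y i ^ 2 * (c j / (α i - β j) ^ 2) := by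
        intro j
        rw [hξ]
        have := hne i j
        field_simp
        rw [← hzz j]; ring
      rw [Finset.sum_congr rfl fun j _ => this j, ← Finset.mul_sum]
      rw [show y i = (Real.sqrt (w i))⁻¹ from rfl, inv_pow, Real.sq_sqrt (hwpos i).le]
      exact inv_mul_cancel₀ (ne_of_gt (hwpos i))
    · simp only [hik, if_false]
      have hab : α k - α i ≠ 0 := sub_ne_zero.mpr fun h => hik (hα.injective h.symm)
      have hterm : ∀ j, ξ i j * ξ k j =
          y i * y k * ((c j / (α i - β j) - c j / (α k - β j)) / (α k - α i)) := by
        intro j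
        rw [hξ]
        have h1 := hne i j
        have h2 := hne k j
        field_simp
        rw [← hzz j]; ring
      rw [Finset.sum_congr rfl fun j _ => hterm j, ← Finset.mul_sum, ← Finset.sum_div,
        Finset.sum_sub_distrib, hS, hS, sub_self, zero_div, mul_zero]
  set XM : Matrix (Fin n) (Fin n) ℂ := Matrix.of fun i j => ((ξ i j : ℝ) : ℂ) with hXM
  set RM : Matrix (Fin n) (Fin n) ℂ := Matrix.of fun i j => ((y i * z j : ℝ) : ℂ) with hRM
  refine ⟨XM, RM, ?_, ?_, ?_⟩
  · rw [Matrix.mem_unitaryGroup_iff]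
    ext i k
    rw [Matrix.star_eq_conjTranspose, Matrix.mul_apply, Matrix.one_apply]
    have : ∀ j, XM i j * XM.conjTranspose j k = ((ξ i j * ξ k j : ℝ) : ℂ) := by
      intro j
      rw [Matrix.conjTranspose_apply, hXM]
      simp [Complex.conj_ofReal]
    rw [Finset.sum_congr rfl fun j _ => this j, ← Complex.ofReal_sum, horth i k]
    split <;> simp
  · -- rank 1
    have hRvec : RM =
        Matrix.vecMulVec (fun i => ((y i : ℝ) : ℂ)) (fun j => ((z j : ℝ) : ℂ)) := by
      ext i j
      simp [hRM, Matrix.vecMulVec_apply]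
    have hle : RM.rank ≤ 1 := by
      rw [hRvec, Matrix.vecMulVec_eq (Fin 1)]
      refine le_trans (Matrix.rank_mul_le _ _) (le_trans (min_le_left _ _) ?_)
      exact (Matrix.rank_le_card_width (Matrix.replicateCol (Fin 1) fun i => ((y i : ℝ) : ℂ))).trans (by simp)
    have hpos : 0 < RM.rank := by
      rw [Matrix.rank]
      rw [Module.finrank_pos_iff_exists_ne_zero]
      set i0 : Fin n := ⟨0, hn⟩
      refine ⟨⟨RM.mulVec (Pi.single i0 1), LinearMap.mem_range_self _ _⟩, ?_⟩
      intro hzero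
      have hv : RM.mulVec (Pi.single i0 1) = 0 := by
        simpa using congrArg Subtype.val hzero
      have h2 := congrFun hv i0
      rw [Matrix.mulVec_single_one] at h2
      simp only [hRM, Matrix.col_apply, Matrix.of_apply, mul_one, Pi.zero_apply] at h2
      have h0 : (y i0 * z i0 : ℝ) = 0 := by exact_mod_cast h2
      exact absurd h0 (ne_of_gt (mul_pos (hypos i0) (hzpos i0)))
    omega
  · ext i j
    rw [Matrix.sub_apply, Matrix.diagonal_mul, Matrix.mul_diagonal]
    simp only [hXM, hRM, Matrix.of_apply]
    have hreal : α i * ξ i j - ξ i j * β j = y i * z j := by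
      rw [hξ]
      simp only []
      rw [mul_div_assoc', div_mul_eq_mul_div, div_sub_div_same,
        show α i * (y i * z j) - y i * z j * β j = y i * z j * (α i - β j) from by ring]
      exact mul_div_cancel_right₀ _ (hne i j)
    push_cast [← hreal]
    ring
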